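/- For any nonnegative real sequence (a_k) and any n ∈ ℕ, the discrete Hardy inequality holds: ∑_{k=1}^n (1/k²)(∑_{j=1}^k a_j)² ≤ 4 ∑_{k=1}^n a_k². -/

import Mathlib

open Finset

private lemma hardy_key (a b : ℕ → ℝ)
    (hb : ∀ k : ℕ, ((k : ℝ)) * b k = ∑ j ∈ Finset.Icc 1 k, a j) (n : ℕ) :
    ∑ k ∈ Finset.Icc 1 n, (b k) ^ 2 + n * (b n) ^ 2
      ≤ 2 * ∑ k ∈ Finset.Icc 1 n, a k * b k := by
  induction n with
  | zero =>
    have h0 : b 0 = 0 ∨ (0:ℝ) = 0 := Or.inr rfl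
    have := hb 0
    simp at this
    simp
  | succ n ih =>
    rw [Finset.sum_Icc_succ_top (by omega : 1 ≤ n + 1),
        Finset.sum_Icc_succ_top (by omega : 1 ≤ n + 1)]
    have h1 : ((n : ℝ) + 1) * b (n + 1) = (n : ℝ) * b n + a (n + 1) := by
      have h := hb (n + 1)
      rw [Finset.sum_Icc_succ_top (by omega : 1 ≤ n + 1), ← hb n] at h
      push_cast at h
      linarith
    have hsq := sq_nonneg (b (n + 1) - b n)
    have hn : (0 : ℝ) ≤ n := Nat.cast_nonneg n
    have h2 : a (n + 1) * b (n + 1)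
        = ((n : ℝ) + 1) * b (n + 1) ^ 2 - (n : ℝ) * (b n * b (n + 1)) := by
      have := congrArg (· * b (n + 1)) h1
      nlinarith [this]
    push_cast
    nlinarith [mul_nonneg hn hsq, h2]

/-- Discrete Hardy inequality (p = 2): for any nonnegative sequence `a` and any `n`,
`∑_{k=1}^n (1/k²) (∑_{j=1}^k a_j)² ≤ 4 ∑_{k=1}^n a_k²`. -/
theorem discrete_hardy (a : ℕ → ℝ) (ha : ∀ k, 0 ≤ a k) (n : ℕ) :
    ∑ k ∈ Finset.Icc 1 n, (1 / (k : ℝ) ^ 2) * (∑ j ∈ Finset.Icc 1 k, a j) ^ 2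
      ≤ 4 * ∑ k ∈ Finset.Icc 1 n, (a k) ^ 2 := by
  set b : ℕ → ℝ := fun k => (∑ j ∈ Finset.Icc 1 k, a j) / k with hbdef
  have hb : ∀ k : ℕ, ((k : ℝ)) * b k = ∑ j ∈ Finset.Icc 1 k, a j := by
    intro k
    rcases Nat.eq_zero_or_pos k with hk | hk
    · simp [hbdef, hk]
    · have hne : (k : ℝ) ≠ 0 := Nat.cast_ne_zero.mpr hk.ne'
      simp only [hbdef]
      field_simp
  have hrw : ∑ k ∈ Finset.Icc 1 n, (1 / (k : ℝ) ^ 2) * (∑ j ∈ Finset.Icc 1 k, a j) ^ 2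
      = ∑ k ∈ Finset.Icc 1 n, (b k) ^ 2 := by
    refine Finset.sum_congr rfl fun k hk => ?_
    simp only [hbdef, div_pow]
    ring
  rw [hrw]
  have h1 : ∑ k ∈ Finset.Icc 1 n, (b k) ^ 2 ≤ 2 * ∑ k ∈ Finset.Icc 1 n, a k * b k := by
    have := hardy_key a b hb n
    nlinarith [mul_nonneg (Nat.cast_nonneg n : (0:ℝ) ≤ n) (sq_nonneg (b n))]
  have h2 := Finset.sum_mul_sq_le_sq_mul_sq (Finset.Icc 1 n) a b
  have hSnn : 0 ≤ ∑ k ∈ Finset.Icc 1 n, (b k) ^ 2 :=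
    Finset.sum_nonneg fun k _ => sq_nonneg _
  have hTnn : 0 ≤ ∑ k ∈ Finset.Icc 1 n, (a k) ^ 2 :=
    Finset.sum_nonneg fun k _ => sq_nonneg _
  nlinarith [sq_nonneg (∑ k ∈ Finset.Icc 1 n, (b k) ^ 2 - 2 * ∑ k ∈ Finset.Icc 1 n, a k * b k)]
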